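/- arXiv:2003.10904 — 4 statements merged into one kernel-verified Lean document; each statement's English description precedes it below -/
import Mathlib

section
/- Let U be a real normed vector space, V a real normed vector space, and B : U × V → ℝ a bilinear form that is continuous with constant M, i.e. |B(w, v)| ≤ M · ‖w‖_U · ‖v‖_V for all w ∈ U, v ∈ V. Suppose u ∈ U solves B(u, v) = F(v) for all v ∈ V and p ∈ V solves B(w, p) = Q(w) for all w ∈ U (F, Q linear). Then for any u_h ∈ U and p_h ∈ V, the error estimator η := F(p_h) − B(u_h, p_h) satisfies |(Q(u) − Q(u_h)) − η| ≤ M · ‖u − u_h‖_U · ‖p − p_h‖_V. -/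
/-- Continuity bound on the discrepancy between the true error in the quantity
of interest and the goal-oriented error estimator. -/
theorem estimator_discrepancy_bound
    {U V : Type*} [NormedAddCommGroup U] [NormedSpace ℝ U]
    [NormedAddCommGroup V] [NormedSpace ℝ V]
    (B : U →ₗ[ℝ] V →ₗ[ℝ] ℝ) (M : ℝ)
    (hB : ∀ (w : U) (v : V), |B w v| ≤ M * ‖w‖ * ‖v‖)
    (F : V →ₗ[ℝ] ℝ) (Q : U →ₗ[ℝ] ℝ)
    (u : U) (hu : ∀ v : V, B u v = F v)
    (p : V) (hp : ∀ w : U, B w p = Q w)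
    (u_h : U) (p_h : V) :
    |(Q u - Q u_h) - (F p_h - B u_h p_h)| ≤ M * ‖u - u_h‖ * ‖p - p_h‖ := by
  have key : (Q u - Q u_h) - (F p_h - B u_h p_h) = B (u - u_h) (p - p_h) := by
    rw [← hp u, ← hp u_h, ← hu p_h]
    simp [map_sub]
  rw [key]
  exact hB _ _
end

section
/- Let U be a real normed vector space, V a real Hilbert space, and B : U × V → ℝ a continuous bilinear form satisfying the inf-sup condition with constant γ > 0: sup_{v ∈ V, v ≠ 0} |B(u, v)| / ‖v‖_V ≥ γ · ‖u‖_U for all u ∈ U. Let T : U → V be the trial-to-test operator with ⟨T u, v⟩_V = B(u, v) for all v ∈ V. Then for every subspace U_h ⊆ U, the discrete inf-sup condition holds with the same constant over the optimal test space V_h := T(U_h): for every u_h ∈ U_h with u_h ≠ 0, sup_{v ∈ V_h, v ≠ 0} |B(u_h, v)| / ‖v‖_V ≥ γ · ‖u_h‖_U. -/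
open RealInnerProductSpace

/-- Unconditional discrete stability of the DPG/AVS-FE method: if `B`
satisfies the inf-sup condition with constant `γ`, then for any trial subspace
`U_h` the discrete inf-sup condition holds with the same constant over the
optimal test space `V_h := T '' U_h`. -/
theorem discrete_inf_sup_optimal_test_space
    {U V : Type*} [NormedAddCommGroup U] [NormedSpace ℝ U]
    [NormedAddCommGroup V] [InnerProductSpace ℝ V] [CompleteSpace V]
    (B : U →ₗ[ℝ] V →ₗ[ℝ] ℝ) (M γ : ℝ) (hγ : 0 < γ)
    (hB : ∀ (u : U) (v : V), |B u v| ≤ M * ‖u‖ * ‖v‖)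
    (hinfsup : ∀ u : U,
        γ * ‖u‖ ≤ ⨆ v : {v : V // v ≠ 0}, |B u (v : V)| / ‖(v : V)‖)
    (T : U → V) (hT : ∀ (u : U) (v : V), ⟪T u, v⟫ = B u v)
    (U_h : Submodule ℝ U) :
    ∀ u_h ∈ U_h, u_h ≠ 0 →
      γ * ‖u_h‖ ≤
        ⨆ v : {v : V // v ∈ T '' (U_h : Set U) ∧ v ≠ 0},
          |B u_h (v : V)| / ‖(v : V)‖ := by
  intro u_h hu_h hne
  -- Cauchy–Schwarz: every quotient is bounded by ‖T u_h‖
  have hCS : ∀ v : V, |B u_h v| ≤ ‖T u_h‖ * ‖v‖ := by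
    intro v
    rw [← hT]
    exact abs_real_inner_le_norm _ _
  have hbound : ∀ v : V, v ≠ 0 → |B u_h v| / ‖v‖ ≤ ‖T u_h‖ := by
    intro v hv
    rw [div_le_iff₀ (norm_pos_iff.mpr hv)]
    exact hCS v
  -- The continuous inf-sup gives γ‖u_h‖ ≤ ‖T u_h‖
  have hkey : γ * ‖u_h‖ ≤ ‖T u_h‖ := by
    refine le_trans (hinfsup u_h) ?_
    by_cases hne' : Nonempty {v : V // v ≠ 0}
    · exact ciSup_le fun v => hbound v v.2
    · haveI := not_nonempty_iff.mp hne'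
      rw [iSup_of_empty']
      exact Real.sSup_empty ▸ norm_nonneg _
  -- T u_h ≠ 0
  have hTne : T u_h ≠ 0 := by
    intro h
    rw [h, norm_zero] at hkey
    exact absurd hkey (not_le.mpr (mul_pos hγ (norm_pos_iff.mpr hne)))
  -- the optimal test vector
  have hmem : T u_h ∈ T '' (U_h : Set U) ∧ T u_h ≠ 0 :=
    ⟨Set.mem_image_of_mem T hu_h, hTne⟩
  have hval : |B u_h (T u_h)| / ‖T u_h‖ = ‖T u_h‖ := by
    have : (B u_h) (T u_h) = ‖T u_h‖ ^ 2 := by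
      rw [← hT, real_inner_self_eq_norm_sq]
    rw [this, abs_of_nonneg (sq_nonneg _), sq,
      mul_div_assoc, div_self (norm_ne_zero_iff.mpr hTne), mul_one]
  have hbdd : BddAbove (Set.range fun v : {v : V // v ∈ T '' (U_h : Set U) ∧ v ≠ 0} =>
      |B u_h (v : V)| / ‖(v : V)‖) := by
    refine ⟨‖T u_h‖, ?_⟩
    rintro x ⟨v, rfl⟩
    exact hbound v v.2.2
  exact le_trans hkey (hval ▸ le_ciSup hbdd ⟨T u_h, hmem⟩)
end

section
/- Let U be a real normed vector space, V a real Hilbert space, B : U × V → ℝ a continuous bilinear form, and T : U → V the trial-to-test operator with ⟨T u, v⟩_V = B(u, v) for all v ∈ V. Suppose u ∈ U solves B(u, v) = F(v) for all v ∈ V (F linear), and u_h belongs to a subspace U_h ⊆ U and satisfies the discrete problem with optimal test space: B(u_h, T w_h) = F(T w_h) for all w_h ∈ U_h. Then u_h is a best approximation of u in the energy norm: ‖T(u − u_h)‖_V ≤ ‖T(u − w_h)‖_V for all w_h ∈ U_h. -/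
open RealInnerProductSpace

/-- Best-approximation property in the energy norm: the discrete solution
computed with the optimal test space minimizes `‖T (u - w_h)‖` over the trial
subspace `U_h`. -/
theorem optimal_test_best_approximation
    {U V : Type*} [NormedAddCommGroup U] [NormedSpace ℝ U]
    [NormedAddCommGroup V] [InnerProductSpace ℝ V] [CompleteSpace V]
    (B : U →ₗ[ℝ] V →ₗ[ℝ] ℝ) (M : ℝ)
    (hB : ∀ (u : U) (v : V), |B u v| ≤ M * ‖u‖ * ‖v‖)
    (T : U → V) (hT : ∀ (u : U) (v : V), ⟪T u, v⟫ = B u v)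
    (F : V →ₗ[ℝ] ℝ)
    (u : U) (hu : ∀ v : V, B u v = F v)
    (U_h : Submodule ℝ U) (u_h : U) (hu_h_mem : u_h ∈ U_h)
    (hu_h : ∀ w_h ∈ U_h, B u_h (T w_h) = F (T w_h)) :
    ∀ w_h ∈ U_h, ‖T (u - u_h)‖ ≤ ‖T (u - w_h)‖ := by
  intro w_h hw
  -- Galerkin orthogonality
  have horth : ∀ w ∈ U_h, ⟪T (u - u_h), T w⟫ = 0 := by
    intro w hwmem
    rw [hT, map_sub, LinearMap.sub_apply, hu, hu_h w hwmem, sub_self]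
  -- additivity of T via inner products
  have hsplit : T (u - w_h) = T (u - u_h) + T (u_h - w_h) := by
    apply ext_inner_right ℝ
    intro v
    rw [inner_add_left, hT, hT, hT]
    simp only [map_sub, LinearMap.sub_apply]
    ring
  have hperp : ⟪T (u - u_h), T (u_h - w_h)⟫ = 0 :=
    horth _ (U_h.sub_mem hu_h_mem hw)
  have hsq : ‖T (u - w_h)‖ ^ 2 = ‖T (u - u_h)‖ ^ 2 + ‖T (u_h - w_h)‖ ^ 2 := by
    rw [hsplit, norm_add_sq_real, hperp]; ring
  nlinarith [norm_nonneg (T (u - w_h)), norm_nonneg (T (u - u_h)),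
    sq_nonneg ‖T (u_h - w_h)‖]
end

section
/- Let U be a real normed vector space, V a real Hilbert space, B : U × V → ℝ a continuous bilinear form, and T : U → V the trial-to-test operator with ⟨T u, v⟩_V = B(u, v) for all v ∈ V. Let U_h ⊆ U be a finite-dimensional subspace on which T is injective, and let F : V → ℝ be a continuous linear functional. Then there exists a unique u_h ∈ U_h satisfying the discrete problem with optimal test functions: B(u_h, T w_h) = F(T w_h) for all w_h ∈ U_h. -/
open RealInnerProductSpace

/-- Existence and uniqueness of the discrete AVS-FE/DPG solution on a
finite-dimensional trial subspace on which the trial-to-test operator is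
injective. -/
theorem discrete_problem_exists_unique
    {U V : Type*} [NormedAddCommGroup U] [NormedSpace ℝ U]
    [NormedAddCommGroup V] [InnerProductSpace ℝ V] [CompleteSpace V]
    (B : U →ₗ[ℝ] V →ₗ[ℝ] ℝ) (M : ℝ)
    (hB : ∀ (u : U) (v : V), |B u v| ≤ M * ‖u‖ * ‖v‖)
    (T : U → V) (hT : ∀ (u : U) (v : V), ⟪T u, v⟫ = B u v)
    (U_h : Submodule ℝ U) [FiniteDimensional ℝ U_h]
    (hTinj : Set.InjOn T (U_h : Set U))
    (F : V →L[ℝ] ℝ) :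
    ∃! u_h : U, u_h ∈ U_h ∧ ∀ w_h ∈ U_h, B u_h (T w_h) = F (T w_h) := by
  -- T is linear
  have Tadd : ∀ u u' : U, T (u + u') = T u + T u' := by
    intro u u'
    apply ext_inner_right ℝ
    intro v
    rw [hT, inner_add_left, hT, hT, map_add, LinearMap.add_apply]
  have Tsmul : ∀ (c : ℝ) (u : U), T (c • u) = c • T u := by
    intro c u
    apply ext_inner_right ℝ
    intro v
    rw [hT, real_inner_smul_left, hT, map_smul, LinearMap.smul_apply, smul_eq_mul]
  set Tl : U →ₗ[ℝ] V := { toFun := T, map_add' := Tadd, map_smul' := Tsmul } with hTl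
  set W : Submodule ℝ V := U_h.map Tl with hW
  haveI : FiniteDimensional ℝ W := Module.Finite.map U_h Tl
  -- Riesz representation on W
  set z : W := (InnerProductSpace.toDual ℝ W).symm (F.comp W.subtypeL) with hz
  have hzspec : ∀ y : W, ⟪((z : W) : V), (y : V)⟫ = F (y : V) := by
    intro y
    rw [← Submodule.coe_inner]
    exact InnerProductSpace.toDual_symm_apply
  obtain ⟨u_h, hu_h, hTu⟩ : ∃ u ∈ U_h, Tl u = (z : V) := z.2
  have hTu' : T u_h = (z : V) := hTu
  have key : ∀ w ∈ U_h, B u_h (T w) = F (T w) := by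
    intro w hw
    have hwW : T w ∈ W := ⟨w, hw, rfl⟩
    have := hzspec ⟨T w, hwW⟩
    rw [← hT, hTu']
    exact this
  refine ⟨u_h, ⟨hu_h, key⟩, ?_⟩
  rintro u' ⟨hu', hBu'⟩
  apply hTinj hu' hu_h
  have hdiff : ∀ w ∈ U_h, ⟪T u' - T u_h, T w⟫ = 0 := by
    intro w hw
    rw [inner_sub_left, hT, hT, hBu' w hw, key w hw, sub_self]
  have hsub : T u' - T u_h = T (u' - u_h) := by
    rw [sub_eq_add_neg u', Tadd, show T (-u_h) = -T u_h by
      simpa using Tsmul (-1) u_h, ← sub_eq_add_neg]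
  have h0 : T u' - T u_h = 0 := by
    have := hdiff (u' - u_h) (U_h.sub_mem hu' hu_h)
    rw [← hsub] at this
    exact inner_self_eq_zero.mp this
  exact sub_eq_zero.mp h0
end
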